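/- Under the same setting of the 1D temperature system with fluid heat conduction, if the hot-gas heat flux q equals 0, then the unique solution is the constant function pair T_f ≡ T_b, T_s ≡ T_b on [0, L]. -/

import Mathlib

open Set Filter Topology

-- helper: no interior local max with positive second derivative
lemma no_max_pos_second (F : ℝ → ℝ) (p : ℝ) (hF : ContDiff ℝ 2 F)
    (h1 : deriv F p = 0) (h2 : 0 < deriv (deriv F) p) (hmax : IsLocalMax F p) : False := by
  have hF1 : ContDiff ℝ 1 (deriv F) := by
    have := (contDiff_succ_iff_deriv (n := 1)).mp (by exact_mod_cast hF)
    exact this.2.2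
  have hd : HasDerivAt (deriv F) (deriv (deriv F) p) p :=
    ((hF1.differentiable (by norm_num)) p).hasDerivAt
  have hslope : Tendsto (slope (deriv F) p) (𝓝[≠] p) (𝓝 (deriv (deriv F) p)) :=
    hasDerivAt_iff_tendsto_slope.mp hd
  have hev : ∀ᶠ y in 𝓝[≠] p, 0 < slope (deriv F) p y :=
    hslope.eventually (eventually_gt_nhds h2)
  have hev2 : ∀ᶠ y in 𝓝[>] p, 0 < slope (deriv F) p y :=
    hev.filter_mono (nhdsWithin_mono p fun y hy => ne_of_gt hy)
  have hev3 : ∀ᶠ y in 𝓝[>] p, F y ≤ F p :=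
    hmax.filter_mono nhdsWithin_le_nhds
  obtain ⟨u, hu, hsub⟩ := mem_nhdsGT_iff_exists_Ioo_subset.mp ((hev2.and hev3).filter_mono le_rfl)
  have hpu : p < u := hu
  set q := (p + u) / 2 with hq
  have hpq : p < q := by simp [hq]; linarith
  have hqu : q < u := by simp [hq]; linarith
  have hmono : StrictMonoOn F (Icc p q) := by
    apply strictMonoOn_of_deriv_pos (convex_Icc p q) (hF.continuous.continuousOn)
    intro x hx
    rw [interior_Icc] at hx
    have hx' : x ∈ Ioo p u := ⟨hx.1, lt_trans hx.2 hqu⟩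
    have := (hsub hx').1
    have hxp : 0 < x - p := by linarith [hx.1]
    have : 0 < (deriv F x - deriv F p) / (x - p) := by simpa [slope_def_field, div_eq_iff (ne_of_gt hxp)] using this
    have := (div_pos_iff.mp this)
    rcases this with ⟨h, _⟩ | ⟨_, h⟩
    · rw [h1] at h; linarith
    · linarith
  have hlt : F p < F q := hmono (left_mem_Icc.mpr (le_of_lt hpq)) (right_mem_Icc.mpr (le_of_lt hpq)) hpq
  have hle : F q ≤ F p := (hsub ⟨hpq, hqu⟩).2
  linarith


-- helper: max on right endpoint forces nonnegative derivative
lemma no_boundary_max_neg_deriv (F : ℝ → ℝ) (L : ℝ) (hL : 0 < L)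
    (hF : DifferentiableAt ℝ F L) (hmax : ∀ y ∈ Icc 0 L, F y ≤ F L)
    (hd : deriv F L < 0) : False := by
  have h1 : HasDerivWithinAt F (deriv F L) (Iio L) L := (hF.hasDerivAt).hasDerivWithinAt
  have hslope : Tendsto (slope F L) (𝓝[Iio L \ {L}] L) (𝓝 (deriv F L)) :=
    hasDerivWithinAt_iff_tendsto_slope.mp h1
  have hIio : Iio L \ {L} = Iio L := diff_singleton_eq_self (by simp)
  rw [hIio] at hslope
  have hev : ∀ᶠ y in 𝓝[<] L, slope F L y < 0 :=
    hslope.eventually (eventually_lt_nhds hd)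
  have hev2 : Ioo 0 L ∈ 𝓝[<] L := Ioo_mem_nhdsLT_of_mem ⟨hL, le_refl L⟩
  have : ∃ y, slope F L y < 0 ∧ y ∈ Ioo 0 L := (hev.and (eventually_of_mem hev2 fun y hy => hy)).exists
  obtain ⟨y, hy1, hy2⟩ := this
  have hyL : y - L < 0 := by linarith [hy2.2]
  have : (F y - F L) / (y - L) < 0 := by simpa [slope_def_field] using hy1
  have hnum : 0 < F y - F L := by
    rcases div_neg_iff.mp this with ⟨h, h'⟩ | ⟨h, h'⟩
    · linarith
    · linarith
  have := hmax y ⟨le_of_lt hy2.1, le_of_lt hy2.2⟩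
  linarith

lemma key_nonpos (a b c h L : ℝ) (ha : 0 < a) (hb : 0 < b) (hc : 0 < c) (hh : 0 < h)
    (hL : 0 < L) (f s : ℝ → ℝ) (hf : ContDiff ℝ 2 f) (hs : ContDiff ℝ 2 s)
    (odef : ∀ y ∈ Set.Ioo 0 L, -a * deriv (deriv f) y + b * deriv f y = h * (s y - f y))
    (odes : ∀ y ∈ Set.Ioo 0 L, c * deriv (deriv s) y = h * (s y - f y))
    (h0f : f 0 = 0) (h0s : s 0 = 0)
    (hLf : deriv f L = h / b * (s L - f L))
    (hLs : c * deriv s L = -(b * (s L - f L))) :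
    ∀ y ∈ Set.Icc 0 L, f y ≤ 0 ∧ s y ≤ 0 := by
  suffices hkey : ∀ ε > (0:ℝ), ∀ y ∈ Set.Icc 0 L, f y ≤ ε * (2*L^2) ∧ s y ≤ ε * (2*L^2) by
    intro y hy
    constructor
    · by_contra hpos
      push_neg at hpos
      have hε : (0:ℝ) < f y / (4*L^2) := by positivity
      have := (hkey _ hε y hy).1
      have heq : f y / (4*L^2) * (2*L^2) = f y / 2 := by field_simp; ring
      rw [heq] at this
      linarith
    · by_contra hpos
      push_neg at hpos
      have hε : (0:ℝ) < s y / (4*L^2) := by positivity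
      have := (hkey _ hε y hy).2
      have heq : s y / (4*L^2) * (2*L^2) = s y / 2 := by field_simp; ring
      rw [heq] at this
      linarith
  intro ε hε
  set F : ℝ → ℝ := fun y => f y - ε * (2*L*y - y^2/2) with hFdef
  set S : ℝ → ℝ := fun y => s y - ε * (2*L*y - y^2/2) with hSdef
  -- basic derivative facts for the barrier
  have hgd : ∀ y : ℝ, HasDerivAt (fun y : ℝ => ε * (2*L*y - y^2/2)) (ε * (2*L - y)) y := by
    intro y
    have h1 : HasDerivAt (fun y : ℝ => 2*L*y - y^2/2) (2*L - y) y := by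
      have hb' : HasDerivAt (fun y : ℝ => y^2) (2*y) y := by simpa using hasDerivAt_pow 2 y
      have := ((hasDerivAt_id y).const_mul (2*L)).sub (hb'.div_const 2)
      rw [show (2*L*1 - 2*y/2 : ℝ) = 2*L - y by ring] at this; exact this
    exact h1.const_mul ε
  have hgc : ContDiff ℝ 2 (fun y : ℝ => ε * (2*L*y - y^2/2)) := by
    apply ContDiff.mul contDiff_const
    exact ((contDiff_const.mul contDiff_id).sub ((contDiff_id.pow 2).div_const 2))
  have hfd : Differentiable ℝ f := hf.differentiable (by norm_num)
  have hsd : Differentiable ℝ s := hs.differentiable (by norm_num)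
  have hf1 : ContDiff ℝ 1 (deriv f) := ((contDiff_succ_iff_deriv (n := 1)).mp (by exact_mod_cast hf)).2.2
  have hs1 : ContDiff ℝ 1 (deriv s) := ((contDiff_succ_iff_deriv (n := 1)).mp (by exact_mod_cast hs)).2.2
  have hfd1 : Differentiable ℝ (deriv f) := hf1.differentiable (by norm_num)
  have hsd1 : Differentiable ℝ (deriv s) := hs1.differentiable (by norm_num)
  have hFc : ContDiff ℝ 2 F := hf.sub hgc
  have hSc : ContDiff ℝ 2 S := hs.sub hgc
  have hF' : deriv F = fun y => deriv f y - ε * (2*L - y) :=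
    funext fun y => (((hfd y).hasDerivAt).sub (hgd y)).deriv
  have hS' : deriv S = fun y => deriv s y - ε * (2*L - y) :=
    funext fun y => (((hsd y).hasDerivAt).sub (hgd y)).deriv
  have hlin : ∀ y : ℝ, HasDerivAt (fun y : ℝ => ε * (2*L - y)) (-ε) y := by
    intro y
    have := ((hasDerivAt_const y (2*L)).sub (hasDerivAt_id y)).const_mul ε
    simpa using this
  have hF'' : ∀ y, deriv (deriv F) y = deriv (deriv f) y + ε := by
    intro y
    rw [hF']
    have := (((hfd1 y).hasDerivAt).sub (hlin y)).deriv
    exact this.trans (by ring)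
  have hS'' : ∀ y, deriv (deriv S) y = deriv (deriv s) y + ε := by
    intro y
    rw [hS']
    have := (((hsd1 y).hasDerivAt).sub (hlin y)).deriv
    exact this.trans (by ring)
  have hdiff : ∀ y, s y - f y = S y - F y := by intro y; simp [hFdef, hSdef]
  -- max of max F S
  have hcont : Continuous fun y => max (F y) (S y) := hFc.continuous.max hSc.continuous
  obtain ⟨p, hpmem, hpmax⟩ := isCompact_Icc.exists_isMaxOn (nonempty_Icc.mpr hL.le)
    hcont.continuousOn
  have hclaim : max (F p) (S p) ≤ 0 := by
    rcases eq_or_lt_of_le hpmem.1 with h0 | h0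
    · -- p = 0
      have : F 0 = 0 := by simp [hFdef, h0f]
      have h2 : S 0 = 0 := by simp [hSdef, h0s]
      rw [← h0, this, h2]; simp
    rcases eq_or_lt_of_le hpmem.2 with hL' | hL'
    · -- p = L : contradiction
      exfalso
      rcases le_or_gt (S p) (F p) with hFS | hFS
      · have hmaxF : ∀ y ∈ Set.Icc 0 L, F y ≤ F L := by
          intro y hy
          have := hpmax hy
          simp only [hL'] at this ⊢
          calc F y ≤ max (F y) (S y) := le_max_left _ _
          _ ≤ max (F L) (S L) := this
          _ = F L := max_eq_left (hL' ▸ hFS)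
        have hdF : deriv F L < 0 := by
          have h1 : deriv F L = deriv f L - ε * (2*L - L) := by rw [hF']
          have h2 : s L - f L ≤ 0 := by
            rw [hdiff]; have := hL' ▸ hFS; linarith
          rw [h1, hLf]
          have : h / b * (s L - f L) ≤ 0 := mul_nonpos_of_nonneg_of_nonpos (by positivity) h2
          nlinarith
        exact no_boundary_max_neg_deriv F L hL (hFc.differentiable (by norm_num) L) hmaxF hdF
      · have hmaxS : ∀ y ∈ Set.Icc 0 L, S y ≤ S L := by
          intro y hy
          have := hpmax hy
          simp only [hL'] at this ⊢
          calc S y ≤ max (F y) (S y) := le_max_right _ _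
          _ ≤ max (F L) (S L) := this
          _ = S L := max_eq_right (le_of_lt (hL' ▸ hFS))
        have hdS : deriv S L < 0 := by
          have h1 : deriv S L = deriv s L - ε * (2*L - L) := by rw [hS']
          have h2 : 0 < s L - f L := by
            rw [hdiff]; have := hL' ▸ hFS; linarith
          have h3 : deriv s L < 0 := by
            have : c * deriv s L < 0 := by rw [hLs]; nlinarith
            nlinarith
          rw [h1]; nlinarith
        exact no_boundary_max_neg_deriv S L hL (hSc.differentiable (by norm_num) L) hmaxS hdS
    · -- p interior : contradiction
      exfalso
      have hpIoo : p ∈ Set.Ioo 0 L := ⟨h0, hL'⟩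
      have hploc : Set.Icc 0 L ∈ 𝓝 p := Icc_mem_nhds h0 hL'
      rcases le_or_gt (S p) (F p) with hFS | hFS
      · have hmaxF : IsLocalMax F p := by
          filter_upwards [hploc] with y hy
          calc F y ≤ max (F y) (S y) := le_max_left _ _
          _ ≤ max (F p) (S p) := hpmax hy
          _ = F p := max_eq_left hFS
        have hd0 : deriv F p = 0 := hmaxF.deriv_eq_zero
        have hfp : deriv f p = ε * (2*L - p) := by
          have := congrFun hF' p
          rw [hd0] at this; linarith [this.symm]
        have hfp2 : deriv (deriv f) p = deriv (deriv F) p - ε := by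
          have := hF'' p; linarith
        have hode := odef p hpIoo
        rw [hfp, hfp2, hdiff] at hode
        have hneg : h * (S p - F p) ≤ 0 := mul_nonpos_of_nonneg_of_nonpos hh.le (by linarith)
        have hpos : 0 < deriv (deriv F) p := by
          by_contra hcon
          push_neg at hcon
          have h1 : 0 ≤ a * (-(deriv (deriv F) p)) := mul_nonneg ha.le (by linarith)
          have h2 : 0 < b * (ε * (2*L - p)) :=
            mul_pos hb (mul_pos hε (by linarith [hpIoo.2]))
          have h3 : 0 < a * ε := mul_pos ha hε
          nlinarith
        exact no_max_pos_second F p hFc hd0 hpos hmaxF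
      · have hmaxS : IsLocalMax S p := by
          filter_upwards [hploc] with y hy
          calc S y ≤ max (F y) (S y) := le_max_right _ _
          _ ≤ max (F p) (S p) := hpmax hy
          _ = S p := max_eq_right hFS.le
        have hd0 : deriv S p = 0 := hmaxS.deriv_eq_zero
        have hsp2 : deriv (deriv s) p = deriv (deriv S) p - ε := by
          have := hS'' p; linarith
        have hode := odes p hpIoo
        rw [hsp2, hdiff] at hode
        have hpos2 : 0 < h * (S p - F p) := mul_pos hh (by linarith)
        have hpos : 0 < deriv (deriv S) p := by nlinarith
        exact no_max_pos_second S p hSc hd0 hpos hmaxS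
  -- conclude
  intro y hy
  have hmy := le_trans (hpmax hy) hclaim
  have hbar : ε * (2*L*y - y^2/2) ≤ ε * (2*L^2) := by
    have h1 : 2*L*y - y^2/2 ≤ 2*L^2 := by nlinarith [hy.1, hy.2, sq_nonneg y]
    exact mul_le_mul_of_nonneg_left h1 hε.le
  constructor
  · have : F y ≤ 0 := le_trans (le_trans (le_max_left _ _) (hpmax hy)) hclaim
    have : f y - ε * (2*L*y - y^2/2) ≤ 0 := this
    linarith
  · have : S y ≤ 0 := le_trans (le_trans (le_max_right _ _) (hpmax hy)) hclaim
    have : s y - ε * (2*L*y - y^2/2) ≤ 0 := this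
    linarith

theorem temp_constant_of_zero_flux
    (phi kf ks cp mdot A hv Tb q L : ℝ)
    (hphi : 0 < phi) (hphi1 : phi < 1) (hkf : 0 < kf) (hks : 0 < ks)
    (hcp : 0 < cp) (hm : 0 < mdot) (hA : 0 < A) (hhv : 0 < hv)
    (hL : 0 < L) (hq : q = 0)
    (Tf Ts : ℝ → ℝ) (hTf : ContDiff ℝ 2 Tf) (hTs : ContDiff ℝ 2 Ts)
    (hodef : ∀ y ∈ Set.Ioo 0 L,
      -(phi * kf) * deriv (deriv Tf) y + (cp * mdot / A) * deriv Tf y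
        = hv * (Ts y - Tf y))
    (hodes : ∀ y ∈ Set.Ioo 0 L,
      (1 - phi) * ks * deriv (deriv Ts) y = hv * (Ts y - Tf y))
    (hbc0f : Tf 0 = Tb) (hbc0s : Ts 0 = Tb)
    (hbcLf : deriv Tf L = hv * A / (cp * mdot) * (Ts L - Tf L))
    (hbcLs : (1 - phi) * ks * deriv Ts L = q - cp * mdot / A * (Ts L - Tf L)) :
    ∀ y ∈ Set.Icc 0 L, Tf y = Tb ∧ Ts y = Tb := by
  have ha : 0 < phi * kf := mul_pos hphi hkf
  have hb : 0 < cp * mdot / A := by positivity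
  have hc : 0 < (1 - phi) * ks := mul_pos (by linarith) hks
  -- derivative rewriting
  have hdf1 : deriv (fun y => Tf y - Tb) = deriv Tf := funext fun x => deriv_sub_const Tb
  have hds1 : deriv (fun y => Ts y - Tb) = deriv Ts := funext fun x => deriv_sub_const Tb
  have hdf2 : deriv (fun y => Tb - Tf y) = fun y => -deriv Tf y :=
    funext fun x => deriv_const_sub Tb
  have hds2 : deriv (fun y => Tb - Ts y) = fun y => -deriv Ts y :=
    funext fun x => deriv_const_sub Tb
  have hddf2 : ∀ y, deriv (deriv (fun y => Tb - Tf y)) y = -deriv (deriv Tf) y := by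
    intro y; rw [hdf2]; exact deriv.neg
  have hdds2 : ∀ y, deriv (deriv (fun y => Tb - Ts y)) y = -deriv (deriv Ts) y := by
    intro y; rw [hds2]; exact deriv.neg
  -- first application : upper bounds
  have h1 := key_nonpos (phi * kf) (cp * mdot / A) ((1 - phi) * ks) hv L ha hb hc hhv hL
    (fun y => Tf y - Tb) (fun y => Ts y - Tb) (hTf.sub contDiff_const) (hTs.sub contDiff_const)
    (by
      intro y hy
      rw [hdf1]
      have := hodef y hy
      linear_combination this)
    (by
      intro y hy
      rw [hds1]
      have := hodes y hy
      linear_combination this)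
    (by simp [hbc0f]) (by simp [hbc0s])
    (by
      rw [hdf1, hbcLf]
      have hAne : A ≠ 0 := ne_of_gt hA
      have hcm : cp * mdot ≠ 0 := by positivity
      field_simp
      try ring)
    (by
      rw [hds1, hbcLs, hq]
      ring)
  -- second application : lower bounds
  have h2 := key_nonpos (phi * kf) (cp * mdot / A) ((1 - phi) * ks) hv L ha hb hc hhv hL
    (fun y => Tb - Tf y) (fun y => Tb - Ts y) (contDiff_const.sub hTf) (contDiff_const.sub hTs)
    (by
      intro y hy
      rw [hddf2, hdf2]
      have := hodef y hy
      linear_combination -this)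
    (by
      intro y hy
      rw [hdds2]
      have := hodes y hy
      linear_combination -this)
    (by simp [hbc0f]) (by simp [hbc0s])
    (by
      rw [hdf2]
      simp only
      rw [hbcLf]
      have hAne : A ≠ 0 := ne_of_gt hA
      have hcm : cp * mdot ≠ 0 := by positivity
      field_simp
      ring)
    (by
      rw [hds2]
      simp only
      rw [mul_neg, hbcLs, hq]
      ring)
  intro y hy
  obtain ⟨u1, u2⟩ := h1 y hy
  obtain ⟨v1, v2⟩ := h2 y hy
  constructor
  · linarith
  · linarith
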